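/- Let (a_n)_{n=1}^∞ be a sequence of scalars with a_1 = a_2 = 0 satisfying Σ_{k=0}^∞ ( Σ_{n=ν_k+1}^{ν_{k+1}} |a_n|² (log₂ n)² )^{1/2} < ∞ with ν_k := 2^{2^k}, let (φ_n)_{n=1}^∞ be an orthonormal system in L₂(X, dμ; H) with fixed strongly measurable representatives, and let σ be a permutation of ℕ. With M_k := {j ∈ ℕ : ν_k + 1 ≤ j ≤ ν_{k+1}} and δ_k(x) := sup_{1 ≤ p ≤ q < ∞} ‖Σ_{n=p}^{q}, restricted to indices n with σ(n) ∈ M_k, a_{σ(n)} φ_{σ(n)}(x)‖_H, one has Σ_{k=0}^∞ δ_k(x) < ∞ for μ-almost every x ∈ X. -/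

import Mathlib

open MeasureTheory Filter
open scoped ENNReal NNReal BigOperators

set_option linter.unusedSectionVars false
set_option linter.unusedVariables false
set_option maxHeartbeats 1000000

private lemma rpow_two_enn (x : ℝ≥0∞) : x ^ (2:ℝ) = x * x := by
  rw [show (2:ℝ) = ((2:ℕ):ℝ) by norm_num, ENNReal.rpow_natCast, sq]

private lemma enn_root_sq (u : ℝ≥0∞) : u ^ ((1:ℝ)/2) * u ^ ((1:ℝ)/2) = u := by
  rw [← rpow_two_enn, ← ENNReal.rpow_mul]
  norm_num

private lemma enn_sq_root (w : ℝ≥0∞) : (w * w) ^ ((1:ℝ)/2) = w := by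
  rw [← rpow_two_enn, ← ENNReal.rpow_mul]
  norm_num

private lemma enn_le_sq {u v : ℝ≥0∞} (h : u ^ ((1:ℝ)/2) ≤ v) : u ≤ v * v := by
  calc u = u ^ ((1:ℝ)/2) * u ^ ((1:ℝ)/2) := (enn_root_sq u).symm
  _ ≤ v * v := mul_le_mul' h h

private lemma orderIso_lt_iff (t : Finset ℕ) (q : ℕ) (i : Fin t.card) :
    ((t.orderIsoOfFin rfl i : ℕ) < q) ↔ (i : ℕ) < (t.filter (fun n => n < q)).card := by
  classical
  set e := t.orderIsoOfFin rfl with he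
  set S : Finset (Fin t.card) := Finset.univ.filter (fun j => ((e j : ℕ) < q)) with hS
  have hcard : S.card = (t.filter (fun n => n < q)).card := by
    refine Finset.card_bij (fun j _ => (e j : ℕ)) ?_ ?_ ?_
    · intro j hj
      rw [hS] at hj
      simp only [Finset.mem_filter, Finset.mem_univ, true_and] at hj
      exact Finset.mem_filter.mpr ⟨(e j).2, hj⟩
    · intro j1 h1 j2 h2 hval
      exact e.injective (Subtype.ext hval)
    · intro n hn
      rcases Finset.mem_filter.mp hn with ⟨hnt, hnq⟩
      refine ⟨e.symm ⟨n, hnt⟩, ?_, ?_⟩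
      · rw [hS]
        simp only [Finset.mem_filter, Finset.mem_univ, true_and, OrderIso.apply_symm_apply]
        exact hnq
      · simp
  have hlow : ∀ j k : Fin t.card, j ≤ k → k ∈ S → j ∈ S := by
    intro j k hjk hk
    rw [hS] at hk ⊢
    simp only [Finset.mem_filter, Finset.mem_univ, true_and] at hk ⊢
    have hmono : (e j : ℕ) ≤ (e k : ℕ) := by exact_mod_cast e.monotone hjk
    omega
  rw [← hcard]
  constructor
  · intro hi
    have hiS : i ∈ S := by rw [hS]; simpa using hi
    have hsub : Finset.Iic i ⊆ S := fun j hj => hlow j i (Finset.mem_Iic.mp hj) hiS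
    have hc := Finset.card_le_card hsub
    rw [Fin.card_Iic] at hc
    omega
  · intro hi
    by_contra hno
    have hiS : i ∉ S := by rw [hS]; simpa using hno
    have hsub : S ⊆ Finset.Iio i := by
      intro j hj
      rw [Finset.mem_Iio]
      rcases lt_or_ge j i with hlt | hle
      · exact hlt
      · exact absurd (hlow i j hle hj) hiS
    have hc := Finset.card_le_card hsub
    rw [Fin.card_Iio] at hc
    omega

private lemma sum_filter_lt_eq {M : Type*} [AddCommMonoid M] (t : Finset ℕ) (F : ℕ → M) (q : ℕ) :
    ∑ n ∈ t.filter (fun n => n < q), F n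
      = ∑ i ∈ Finset.range ((t.filter (fun n => n < q)).card),
          (if h : i < t.card then F ((t.orderIsoOfFin rfl ⟨i, h⟩ : ℕ)) else 0) := by
  classical
  set e := t.orderIsoOfFin rfl with he
  set m := (t.filter (fun n => n < q)).card with hm
  have hcle : m ≤ t.card := Finset.card_filter_le _ _
  set G : ℕ → M := fun i =>
    if h : i < t.card then (if i < m then F ((e ⟨i, h⟩ : ℕ)) else 0) else 0 with hG
  have h1 : ∑ n ∈ t.filter (fun n => n < q), F n
      = ∑ j : Fin t.card, (if ((e j : ℕ)) < q then F ((e j : ℕ)) else 0) := by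
    rw [Finset.sum_filter]
    rw [← Finset.sum_coe_sort t (fun n => if n < q then F n else 0)]
    exact (Equiv.sum_comp e.toEquiv (fun x => if (x : ℕ) < q then F (x : ℕ) else 0)).symm
  have h2 : ∑ j : Fin t.card, (if ((e j : ℕ)) < q then F ((e j : ℕ)) else 0)
      = ∑ j : Fin t.card, G (j : ℕ) := by
    refine Finset.sum_congr rfl fun j _ => ?_
    have hGj : G (j : ℕ) = if (j : ℕ) < m then F ((e j : ℕ)) else 0 := by
      simp only [hG, dif_pos j.isLt, Fin.eta]
    rw [hGj]
    by_cases hq : (e j : ℕ) < q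
    · rw [if_pos hq, if_pos ((orderIso_lt_iff t q j).mp hq)]
    · rw [if_neg hq, if_neg (fun hc => hq ((orderIso_lt_iff t q j).mpr hc))]
  have h3 : ∑ j : Fin t.card, G (j : ℕ) = ∑ i ∈ Finset.range t.card, G i :=
    Fin.sum_univ_eq_sum_range G t.card
  have h4 : ∑ i ∈ Finset.range m, G i = ∑ i ∈ Finset.range t.card, G i := by
    refine Finset.sum_subset (Finset.range_subset_range.mpr hcle) ?_
    intro i hiN him
    rw [Finset.mem_range] at hiN
    rw [Finset.mem_range, not_lt] at him
    simp only [hG, dif_pos hiN]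
    rw [if_neg (by omega)]
  have h5 : ∑ i ∈ Finset.range m, G i
      = ∑ i ∈ Finset.range m, (if h : i < t.card then F ((e ⟨i, h⟩ : ℕ)) else 0) := by
    refine Finset.sum_congr rfl fun i hi => ?_
    rw [Finset.mem_range] at hi
    have hlt : i < t.card := lt_of_lt_of_le hi hcle
    simp only [hG, dif_pos hlt, if_pos hi]
  rw [h1, h2, h3, ← h4, h5]


private lemma sum_over_finset_eq {M : Type*} [AddCommMonoid M] (t : Finset ℕ) (γ : ℕ → M) :
    ∑ n ∈ t, γ n
      = ∑ i ∈ Finset.range t.card,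
          (if h : i < t.card then γ ((t.orderIsoOfFin rfl ⟨i, h⟩ : ℕ)) else 0) := by
  have hbig : t.filter (fun n => n < (t.sup id) + 1) = t := by
    ext n
    simp only [Finset.mem_filter, and_iff_left_iff_imp]
    intro hn
    exact Nat.lt_succ_of_le (Finset.le_sup (f := id) hn)
  have h := sum_filter_lt_eq t γ ((t.sup id) + 1)
  rwa [hbig] at h

section norm_sq
variable {X : Type*} [MeasurableSpace X] {μ : Measure X}
variable {H : Type*} [NormedAddCommGroup H]

private lemma lintegral_nnnorm_sq_eq {f : X → H} (hf : MemLp f 2 μ) :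
    ∫⁻ x, (‖f x‖₊ : ℝ≥0∞) ^ (2:ℝ) ∂μ = ENNReal.ofReal (∫ x, ‖f x‖^2 ∂μ) := by
  have hint : Integrable (fun x => ‖f x‖^2) μ := by
    have := hf.integrable_norm_rpow (by norm_num) (by norm_num)
    simpa [Real.rpow_natCast] using this
  rw [ofReal_integral_eq_lintegral_ofReal hint (Eventually.of_forall fun x => sq_nonneg _)]
  congr 1
  ext x
  rw [sq, ENNReal.ofReal_mul (norm_nonneg _), ofReal_norm, enorm_eq_nnnorm, rpow_two_enn]
end norm_sq

section ips
variable {X : Type*} [MeasurableSpace X] {μ : Measure X}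
variable {𝕜 : Type*} [RCLike 𝕜]
variable {H : Type*} [NormedAddCommGroup H] [InnerProductSpace 𝕜 H] [CompleteSpace H]

private lemma integrable_inner_of_mem {f g : X → H} (hf : MemLp f 2 μ) (hg : MemLp g 2 μ) :
    Integrable (fun x => (inner 𝕜 (f x) (g x) : 𝕜)) μ := by
  have h := MeasureTheory.L2.integrable_inner (𝕜 := 𝕜) (hf.toLp f) (hg.toLp g)
  refine h.congr ?_
  filter_upwards [hf.coeFn_toLp, hg.coeFn_toLp] with x h1 h2
  rw [h1, h2]

/-- Pythagoras for pairwise-orthogonal `ℒ²` functions. -/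
private lemma lintegral_sq_sum_orth (𝕜 : Type*) [RCLike 𝕜]
    {H : Type*} [NormedAddCommGroup H] [InnerProductSpace 𝕜 H] [CompleteSpace H]
    {ψ : ℕ → X → H} (hψ : ∀ n, MemLp (ψ n) 2 μ)
    (horth : ∀ i j, i ≠ j → ∫ x, (inner 𝕜 (ψ i x) (ψ j x) : 𝕜) ∂μ = 0) (s : Finset ℕ) :
    ∫⁻ x, (‖∑ n ∈ s, ψ n x‖₊ : ℝ≥0∞) ^ (2:ℝ) ∂μ
      = ∑ n ∈ s, ∫⁻ x, (‖ψ n x‖₊ : ℝ≥0∞) ^ (2:ℝ) ∂μ := by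
  have hsum : MemLp (fun x => ∑ n ∈ s, ψ n x) 2 μ := memLp_finset_sum s (fun n _ => hψ n)
  rw [lintegral_nnnorm_sq_eq hsum]
  have key : ∫ x, ‖∑ n ∈ s, ψ n x‖^2 ∂μ = ∑ n ∈ s, ∫ x, ‖ψ n x‖^2 ∂μ := by
    have h1 : ∀ x, ‖∑ n ∈ s, ψ n x‖^2
        = RCLike.re (∑ i ∈ s, ∑ j ∈ s, (inner 𝕜 (ψ i x) (ψ j x) : 𝕜)) := by
      intro x
      rw [← inner_self_eq_norm_sq (𝕜 := 𝕜), sum_inner]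
      congr 1
      exact Finset.sum_congr rfl fun i _ => inner_sum _ _ _
    calc ∫ x, ‖∑ n ∈ s, ψ n x‖^2 ∂μ
        = ∫ x, RCLike.re (∑ i ∈ s, ∑ j ∈ s, (inner 𝕜 (ψ i x) (ψ j x) : 𝕜)) ∂μ := by
          simp_rw [h1]
      _ = RCLike.re (∫ x, (∑ i ∈ s, ∑ j ∈ s, (inner 𝕜 (ψ i x) (ψ j x) : 𝕜)) ∂μ) := by
          refine integral_re ?_
          exact integrable_finset_sum s fun i _ =>
            integrable_finset_sum s fun j _ => integrable_inner_of_mem (hψ i) (hψ j)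
      _ = RCLike.re (∑ i ∈ s, ∑ j ∈ s, ∫ x, (inner 𝕜 (ψ i x) (ψ j x) : 𝕜) ∂μ) := by
          rw [integral_finset_sum s fun i _ =>
            integrable_finset_sum s fun j _ => integrable_inner_of_mem (hψ i) (hψ j)]
          congr 1
          exact Finset.sum_congr rfl fun i _ =>
            integral_finset_sum s fun j _ => integrable_inner_of_mem (hψ i) (hψ j)
      _ = RCLike.re (∑ i ∈ s, ∫ x, (inner 𝕜 (ψ i x) (ψ i x) : 𝕜) ∂μ) := by
          congr 1
          refine Finset.sum_congr rfl fun i hi => ?_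
          exact Finset.sum_eq_single_of_mem i hi fun j _ hji => horth i j (Ne.symm hji)
      _ = ∑ i ∈ s, ∫ x, ‖ψ i x‖^2 ∂μ := by
          rw [map_sum]
          refine Finset.sum_congr rfl fun i _ => ?_
          rw [← integral_re (integrable_inner_of_mem (hψ i) (hψ i))]
          refine integral_congr_ae (Eventually.of_forall fun x => ?_)
          exact inner_self_eq_norm_sq _
  rw [key, ENNReal.ofReal_sum_of_nonneg (fun n _ => integral_nonneg fun x => sq_nonneg _)]
  exact Finset.sum_congr rfl fun n _ => (lintegral_nnnorm_sq_eq (hψ n)).symm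

/-- Menshov–Rademacher maximal inequality. -/
private lemma MR_maximal (𝕜 : Type*) [RCLike 𝕜]
    {H : Type*} [NormedAddCommGroup H] [InnerProductSpace 𝕜 H] [CompleteSpace H]
    {ψ : ℕ → X → H} (hψ : ∀ n, MemLp (ψ n) 2 μ)
    (horth : ∀ i j, i ≠ j → ∫ x, (inner 𝕜 (ψ i x) (ψ j x) : 𝕜) ∂μ = 0) :
    ∀ d lo : ℕ,
    (∫⁻ x, ((Finset.Icc lo (lo + d)).sup
        fun m => (‖∑ n ∈ Finset.Ico lo m, ψ n x‖₊ : ℝ≥0∞)) ^ (2:ℝ) ∂μ) ^ ((1:ℝ)/2)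
      ≤ ((Nat.clog 2 d : ℝ≥0∞) + 1)
        * (∑ n ∈ Finset.Ico lo (lo + d), ∫⁻ x, (‖ψ n x‖₊ : ℝ≥0∞) ^ (2:ℝ) ∂μ) ^ ((1:ℝ)/2) := by
  have haux : ∀ s : Finset ℕ, AEMeasurable (fun x => (‖∑ n ∈ s, ψ n x‖₊ : ℝ≥0∞)) μ :=
    fun s => (memLp_finset_sum s fun n _ => hψ n).aestronglyMeasurable.enorm
  have hsupmeas : ∀ lo hi : ℕ, AEMeasurable
      (fun x => (Finset.Icc lo hi).sup fun m => (‖∑ n ∈ Finset.Ico lo m, ψ n x‖₊ : ℝ≥0∞)) μ := by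
    intro lo hi
    simp only [Finset.sup_eq_iSup]
    exact AEMeasurable.iSup fun m => AEMeasurable.iSup fun _ => haux _
  intro d
  induction d using Nat.strong_induction_on with
  | _ d ih =>
  intro lo
  match d, ih with
  | 0, _ => simp
  | 1, _ =>
    have hpt : ∀ x, ((Finset.Icc lo (lo + 1)).sup
        fun m => (‖∑ n ∈ Finset.Ico lo m, ψ n x‖₊ : ℝ≥0∞)) ≤ (‖ψ lo x‖₊ : ℝ≥0∞) := by
      intro x
      refine Finset.sup_le fun m hm => ?_
      rcases Finset.mem_Icc.mp hm with ⟨h1, h2⟩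
      have : m = lo ∨ m = lo + 1 := by omega
      rcases this with rfl | rfl
      · simp
      · simp [Nat.Ico_succ_singleton]
    calc (∫⁻ x, ((Finset.Icc lo (lo + 1)).sup
            fun m => (‖∑ n ∈ Finset.Ico lo m, ψ n x‖₊ : ℝ≥0∞)) ^ (2:ℝ) ∂μ) ^ ((1:ℝ)/2)
        ≤ (∫⁻ x, (‖ψ lo x‖₊ : ℝ≥0∞) ^ (2:ℝ) ∂μ) ^ ((1:ℝ)/2) := by
          gcongr with x
          exact hpt x
      _ = (∑ n ∈ Finset.Ico lo (lo + 1), ∫⁻ x, (‖ψ n x‖₊ : ℝ≥0∞) ^ (2:ℝ) ∂μ) ^ ((1:ℝ)/2) := by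
          rw [Nat.Ico_succ_singleton, Finset.sum_singleton]
      _ ≤ _ := by
          rw [Nat.clog_one_right]
          simp only [Nat.cast_zero, zero_add, one_mul, le_refl]
  | (d+2), ih =>
    set D := d + 2 with hD
    have hd : 2 ≤ D := by omega
    set d1 := (D+1)/2 with hd1
    set d2 := D - d1 with hd2
    have h12 : d1 < D := by omega
    have h21 : 1 ≤ d2 := by omega
    have h2led1 : d2 ≤ d1 := by omega
    have h2ltD : d2 < D := by omega
    set h := lo + d1 with hh
    have hhd : h + d2 = lo + D := by omega
    have hclog : Nat.clog 2 D = Nat.clog 2 d1 + 1 := by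
      have e1 : (D + 2 - 1) / 2 = d1 := by omega
      rw [Nat.clog_of_two_le one_lt_two hd, e1]
    set g : X → ℝ≥0∞ := fun x => (‖∑ n ∈ Finset.Ico lo h, ψ n x‖₊ : ℝ≥0∞) with hgdef
    set Φ1 : X → ℝ≥0∞ := fun x => (Finset.Icc lo h).sup
      fun m => (‖∑ n ∈ Finset.Ico lo m, ψ n x‖₊ : ℝ≥0∞) with hΦ1def
    set Φ2 : X → ℝ≥0∞ := fun x => (Finset.Icc h (h + d2)).sup
      fun m => (‖∑ n ∈ Finset.Ico h m, ψ n x‖₊ : ℝ≥0∞) with hΦ2def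
    have hpt : ∀ x, ((Finset.Icc lo (lo + D)).sup
        fun m => (‖∑ n ∈ Finset.Ico lo m, ψ n x‖₊ : ℝ≥0∞)) ≤ g x + (Φ1 x ⊔ Φ2 x) := by
      intro x
      refine Finset.sup_le fun m hm => ?_
      rcases Finset.mem_Icc.mp hm with ⟨hm1, hm2⟩
      by_cases hmh : m ≤ h
      · calc (‖∑ n ∈ Finset.Ico lo m, ψ n x‖₊ : ℝ≥0∞)
            ≤ Φ1 x := by
              simp only [hΦ1def]
              exact Finset.le_sup (f := fun m => (‖∑ n ∈ Finset.Ico lo m, ψ n x‖₊ : ℝ≥0∞))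
                (Finset.mem_Icc.mpr ⟨hm1, hmh⟩)
          _ ≤ Φ1 x ⊔ Φ2 x := le_sup_left
          _ ≤ g x + (Φ1 x ⊔ Φ2 x) := le_add_self
      · push_neg at hmh
        have hsplit : ∑ n ∈ Finset.Ico lo m, ψ n x
            = ∑ n ∈ Finset.Ico lo h, ψ n x + ∑ n ∈ Finset.Ico h m, ψ n x :=
          (Finset.sum_Ico_consecutive _ (by omega) hmh.le).symm
        calc (‖∑ n ∈ Finset.Ico lo m, ψ n x‖₊ : ℝ≥0∞)
            ≤ g x + (‖∑ n ∈ Finset.Ico h m, ψ n x‖₊ : ℝ≥0∞) := by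
              simp only [hsplit, hgdef]
              exact_mod_cast nnnorm_add_le _ _
          _ ≤ g x + (Φ1 x ⊔ Φ2 x) := by
              gcongr
              refine le_trans ?_ le_sup_right
              simp only [hΦ2def]
              have hmem : m ∈ Finset.Icc h (h + d2) := Finset.mem_Icc.mpr ⟨hmh.le, by omega⟩
              exact Finset.le_sup (f := fun m => (‖∑ n ∈ Finset.Ico h m, ψ n x‖₊ : ℝ≥0∞)) hmem
    set A1 := ∑ n ∈ Finset.Ico lo h, ∫⁻ x, (‖ψ n x‖₊ : ℝ≥0∞) ^ (2:ℝ) ∂μ with hA1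
    set A2 := ∑ n ∈ Finset.Ico h (h + d2), ∫⁻ x, (‖ψ n x‖₊ : ℝ≥0∞) ^ (2:ℝ) ∂μ with hA2
    set A := ∑ n ∈ Finset.Ico lo (lo + D), ∫⁻ x, (‖ψ n x‖₊ : ℝ≥0∞) ^ (2:ℝ) ∂μ with hA
    have hA12 : A1 + A2 = A := by
      rw [hA1, hA2, hA, hhd]
      exact Finset.sum_Ico_consecutive _ (by omega) (by omega)
    have hIH1 : (∫⁻ x, Φ1 x ^ (2:ℝ) ∂μ) ^ ((1:ℝ)/2) ≤ ((Nat.clog 2 d1 : ℝ≥0∞) + 1) * A1 ^ ((1:ℝ)/2) := ih d1 h12 lo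
    have hC2 : ((Nat.clog 2 d2 : ℝ≥0∞) + 1) ≤ ((Nat.clog 2 d1 : ℝ≥0∞) + 1) := by
      gcongr
    have hIH2 : (∫⁻ x, Φ2 x ^ (2:ℝ) ∂μ) ^ ((1:ℝ)/2)
        ≤ ((Nat.clog 2 d1 : ℝ≥0∞) + 1) * A2 ^ ((1:ℝ)/2) :=
      le_trans (ih d2 h2ltD h) (mul_le_mul_left hC2 _)
    have hg2 : ∫⁻ x, g x ^ (2:ℝ) ∂μ = A1 := lintegral_sq_sum_orth 𝕜 hψ horth _
    have hsupsq : ∫⁻ x, (Φ1 x ⊔ Φ2 x) ^ (2:ℝ) ∂μ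
        ≤ ((Nat.clog 2 d1 : ℝ≥0∞) + 1) * ((Nat.clog 2 d1 : ℝ≥0∞) + 1) * A := by
      have hptsq : ∀ x, (Φ1 x ⊔ Φ2 x) ^ (2:ℝ) ≤ Φ1 x ^ (2:ℝ) + Φ2 x ^ (2:ℝ) := by
        intro x
        rcases le_total (Φ1 x) (Φ2 x) with hc | hc
        · rw [sup_eq_right.mpr hc]; exact le_add_self
        · rw [sup_eq_left.mpr hc]; exact self_le_add_right _ _
      calc ∫⁻ x, (Φ1 x ⊔ Φ2 x) ^ (2:ℝ) ∂μ
          ≤ ∫⁻ x, (Φ1 x ^ (2:ℝ) + Φ2 x ^ (2:ℝ)) ∂μ := lintegral_mono hptsq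
        _ = (∫⁻ x, Φ1 x ^ (2:ℝ) ∂μ) + ∫⁻ x, Φ2 x ^ (2:ℝ) ∂μ :=
            lintegral_add_left' ((hsupmeas lo h).pow_const _) _
        _ ≤ (((Nat.clog 2 d1 : ℝ≥0∞) + 1) * A1 ^ ((1:ℝ)/2)) * (((Nat.clog 2 d1 : ℝ≥0∞) + 1) * A1 ^ ((1:ℝ)/2))
            + (((Nat.clog 2 d1 : ℝ≥0∞) + 1) * A2 ^ ((1:ℝ)/2)) * (((Nat.clog 2 d1 : ℝ≥0∞) + 1) * A2 ^ ((1:ℝ)/2)) :=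
            add_le_add (enn_le_sq hIH1) (enn_le_sq hIH2)
        _ = ((Nat.clog 2 d1 : ℝ≥0∞) + 1) * ((Nat.clog 2 d1 : ℝ≥0∞) + 1) * (A1 + A2) := by
            rw [mul_add]
            congr 1 <;>
            · rw [mul_mul_mul_comm, enn_root_sq]
        _ = ((Nat.clog 2 d1 : ℝ≥0∞) + 1) * ((Nat.clog 2 d1 : ℝ≥0∞) + 1) * A := by rw [hA12]
    calc (∫⁻ x, ((Finset.Icc lo (lo + D)).sup
            fun m => (‖∑ n ∈ Finset.Ico lo m, ψ n x‖₊ : ℝ≥0∞)) ^ (2:ℝ) ∂μ) ^ ((1:ℝ)/2)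
        ≤ (∫⁻ x, (g x + (Φ1 x ⊔ Φ2 x)) ^ (2:ℝ) ∂μ) ^ ((1:ℝ)/2) := by
          gcongr with x
          exact hpt x
      _ ≤ (∫⁻ x, g x ^ (2:ℝ) ∂μ) ^ ((1:ℝ)/2) + (∫⁻ x, (Φ1 x ⊔ Φ2 x) ^ (2:ℝ) ∂μ) ^ ((1:ℝ)/2) := by
          have hm2 : AEMeasurable (fun x => Φ1 x ⊔ Φ2 x) μ :=
            (hsupmeas lo h).sup' (hsupmeas h (h + d2))
          have := ENNReal.lintegral_Lp_add_le (p := 2) (haux (Finset.Ico lo h)) hm2 one_le_two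
          exact this
      _ ≤ A ^ ((1:ℝ)/2) + (((Nat.clog 2 d1 : ℝ≥0∞) + 1) * ((Nat.clog 2 d1 : ℝ≥0∞) + 1) * A) ^ ((1:ℝ)/2) := by
          refine add_le_add ?_ ?_
          · refine ENNReal.rpow_le_rpow ?_ (by norm_num)
            rw [hg2]
            exact Finset.sum_le_sum_of_subset (Finset.Ico_subset_Ico le_rfl (by omega))
          · exact ENNReal.rpow_le_rpow hsupsq (by norm_num)
      _ = ((Nat.clog 2 D : ℝ≥0∞) + 1) * A ^ ((1:ℝ)/2) := by
          rw [ENNReal.mul_rpow_of_nonneg _ _ (by norm_num), enn_sq_root, hclog]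
          push_cast
          ring

/-- Maximal inequality for partial sums of an orthogonal family indexed by a finite set
of naturals, over "initial segments" of that set. -/
private lemma block_maximal (𝕜 : Type*) [RCLike 𝕜]
    {H : Type*} [NormedAddCommGroup H] [InnerProductSpace 𝕜 H] [CompleteSpace H]
    {G : ℕ → X → H} (t : Finset ℕ)
    (hG : ∀ n ∈ t, MemLp (G n) 2 μ)
    (horthG : ∀ m n, m ∈ t → n ∈ t → m ≠ n → ∫ x, (inner 𝕜 (G m x) (G n x) : 𝕜) ∂μ = 0) :
    (∫⁻ x, (⨆ q : ℕ, (‖∑ n ∈ t.filter (fun n => n < q), G n x‖₊ : ℝ≥0∞)) ^ (2:ℝ) ∂μ) ^ ((1:ℝ)/2)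
      ≤ ((Nat.clog 2 t.card : ℝ≥0∞) + 1)
        * (∑ n ∈ t, ∫⁻ x, (‖G n x‖₊ : ℝ≥0∞) ^ (2:ℝ) ∂μ) ^ ((1:ℝ)/2) := by
  classical
  set ψ : ℕ → X → H := fun i x =>
    if h : i < t.card then G ((t.orderIsoOfFin rfl ⟨i, h⟩ : ℕ)) x else 0 with hψ
  have hmem_e : ∀ (i : ℕ) (h : i < t.card), ((t.orderIsoOfFin rfl ⟨i, h⟩ : ℕ)) ∈ t :=
    fun i h => (t.orderIsoOfFin rfl ⟨i, h⟩).2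
  have hψmem : ∀ i, MemLp (ψ i) 2 μ := by
    intro i
    by_cases h : i < t.card
    · have := hG _ (hmem_e i h)
      simp only [hψ, dif_pos h]
      exact this.comp_measurePreserving (MeasurePreserving.id μ) |>.mono_measure le_rfl |>.mono_measure le_rfl
    · simp only [hψ, dif_neg h]
      exact MemLp.zero'
  have hψorth : ∀ i j, i ≠ j → ∫ x, (inner 𝕜 (ψ i x) (ψ j x) : 𝕜) ∂μ = 0 := by
    intro i j hij
    by_cases hi : i < t.card
    · by_cases hj : j < t.card
      · have hne : ((t.orderIsoOfFin rfl ⟨i, hi⟩ : ℕ)) ≠ ((t.orderIsoOfFin rfl ⟨j, hj⟩ : ℕ)) := by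
          intro hcon
          apply hij
          have h3 : t.orderIsoOfFin rfl ⟨i, hi⟩ = t.orderIsoOfFin rfl ⟨j, hj⟩ :=
            Subtype.ext hcon
          have h4 := (t.orderIsoOfFin rfl).injective h3
          exact congrArg Fin.val h4
        simp only [hψ, dif_pos hi, dif_pos hj]
        exact horthG _ _ (hmem_e i hi) (hmem_e j hj) hne
      · simp only [hψ, dif_neg hj, inner_zero_right, integral_zero]
    · simp only [hψ, dif_neg hi, inner_zero_left, integral_zero]
  have hMR := MR_maximal 𝕜 hψmem hψorth t.card 0
  simp only [zero_add] at hMR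
  have hsum_eq : ∑ n ∈ Finset.Ico 0 t.card, ∫⁻ x, (‖ψ n x‖₊ : ℝ≥0∞) ^ (2:ℝ) ∂μ
      = ∑ n ∈ t, ∫⁻ x, (‖G n x‖₊ : ℝ≥0∞) ^ (2:ℝ) ∂μ := by
    rw [← Finset.range_eq_Ico,
      sum_over_finset_eq t (fun n => ∫⁻ x, (‖G n x‖₊ : ℝ≥0∞) ^ (2:ℝ) ∂μ)]
    refine Finset.sum_congr rfl fun i hi => ?_
    have h : i < t.card := Finset.mem_range.mp hi
    rw [dif_pos h]
    refine lintegral_congr_ae (Eventually.of_forall fun x => ?_)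
    simp only [hψ, dif_pos h]
  have hptw : ∀ x, (⨆ q : ℕ, (‖∑ n ∈ t.filter (fun n => n < q), G n x‖₊ : ℝ≥0∞))
      ≤ (Finset.Icc 0 t.card).sup fun m => (‖∑ i ∈ Finset.Ico 0 m, ψ i x‖₊ : ℝ≥0∞) := by
    intro x
    refine iSup_le fun q => ?_
    have hsum := sum_filter_lt_eq t (fun n => G n x) q
    have hcard : (t.filter (fun n => n < q)).card ≤ t.card := Finset.card_filter_le _ _
    have heq : ∑ n ∈ t.filter (fun n => n < q), G n x
        = ∑ i ∈ Finset.Ico 0 ((t.filter (fun n => n < q)).card), ψ i x := by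
      rw [← Finset.range_eq_Ico, hsum]
    rw [heq]
    exact Finset.le_sup (f := fun m => (‖∑ i ∈ Finset.Ico 0 m, ψ i x‖₊ : ℝ≥0∞))
      (Finset.mem_Icc.mpr ⟨Nat.zero_le _, hcard⟩)
  calc (∫⁻ x, (⨆ q : ℕ, (‖∑ n ∈ t.filter (fun n => n < q), G n x‖₊ : ℝ≥0∞)) ^ (2:ℝ) ∂μ) ^ ((1:ℝ)/2)
      ≤ (∫⁻ x, ((Finset.Icc 0 t.card).sup
          fun m => (‖∑ i ∈ Finset.Ico 0 m, ψ i x‖₊ : ℝ≥0∞)) ^ (2:ℝ) ∂μ) ^ ((1:ℝ)/2) := by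
        gcongr with x
        exact hptw x
    _ ≤ ((Nat.clog 2 t.card : ℝ≥0∞) + 1)
        * (∑ n ∈ t, ∫⁻ x, (‖G n x‖₊ : ℝ≥0∞) ^ (2:ℝ) ∂μ) ^ ((1:ℝ)/2) := by
        rw [← hsum_eq]
        exact hMR
end ips

section ae
variable {X : Type*} [MeasurableSpace X] {μ : Measure X}

private lemma lintegral_Lp_sum_le (f : ℕ → X → ℝ≥0∞) (hf : ∀ k, AEMeasurable (f k) μ)
    (s : Finset ℕ) :
    (∫⁻ x, (∑ k ∈ s, f k x) ^ (2:ℝ) ∂μ) ^ ((1:ℝ)/2)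
      ≤ ∑ k ∈ s, (∫⁻ x, (f k x) ^ (2:ℝ) ∂μ) ^ ((1:ℝ)/2) := by
  classical
  induction s using Finset.cons_induction with
  | empty => simp [ENNReal.zero_rpow_of_pos]
  | cons a s ha ih =>
    simp only [Finset.sum_cons]
    calc (∫⁻ x, (f a x + ∑ k ∈ s, f k x) ^ (2:ℝ) ∂μ) ^ ((1:ℝ)/2)
        ≤ (∫⁻ x, (f a x) ^ (2:ℝ) ∂μ) ^ ((1:ℝ)/2)
          + (∫⁻ x, (∑ k ∈ s, f k x) ^ (2:ℝ) ∂μ) ^ ((1:ℝ)/2) :=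
          ENNReal.lintegral_Lp_add_le (hf a) (Finset.aemeasurable_fun_sum s fun k _ => hf k)
            one_le_two
      _ ≤ _ := add_le_add le_rfl ih

private lemma ae_tsum_lt_top (δ : ℕ → X → ℝ≥0∞)
    (hmeas : ∀ k, AEMeasurable (δ k) μ)
    (hsum : (∑' k, (∫⁻ x, (δ k x) ^ (2:ℝ) ∂μ) ^ ((1:ℝ)/2)) ≠ ⊤) :
    ∀ᵐ x ∂μ, (∑' k, δ k x) < ⊤ := by
  classical
  set S := ∑' k, (∫⁻ x, (δ k x) ^ (2:ℝ) ∂μ) ^ ((1:ℝ)/2) with hS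
  set F : ℕ → X → ℝ≥0∞ := fun K x => ∑ k ∈ Finset.range K, δ k x with hF
  have hFmeas : ∀ K, AEMeasurable (F K) μ := fun K =>
    Finset.aemeasurable_fun_sum _ fun k _ => hmeas k
  have hQF : ∀ K, (∫⁻ x, (F K x) ^ (2:ℝ) ∂μ) ^ ((1:ℝ)/2) ≤ S := by
    intro K
    refine le_trans (lintegral_Lp_sum_le δ hmeas (Finset.range K)) ?_
    exact ENNReal.sum_le_tsum _
  have hmono : ∀ x, Monotone fun K => F K x := by
    intro x K L hKL
    exact Finset.sum_le_sum_of_subset (Finset.range_subset_range.mpr hKL)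
  set g : X → ℝ≥0∞ := fun x => ∑' k, δ k x with hg
  have hgmeas : AEMeasurable g μ := AEMeasurable.ennreal_tsum hmeas
  have hgsup : ∀ x, g x = ⨆ K, F K x := fun x => ENNReal.tsum_eq_iSup_nat
  have hsq : ∀ x, g x * g x = ⨆ K, F K x * F K x := by
    intro x
    refine le_antisymm ?_ ?_
    · rw [hgsup x, ENNReal.iSup_mul]
      refine iSup_le fun K => ?_
      rw [ENNReal.mul_iSup]
      refine iSup_le fun L => ?_
      refine le_trans (mul_le_mul' (hmono x (le_max_left K L)) (hmono x (le_max_right K L))) ?_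
      exact le_iSup (fun M => F M x * F M x) (max K L)
    · refine iSup_le fun K => ?_
      rw [hgsup x]
      exact mul_le_mul' (le_iSup (fun K => F K x) K) (le_iSup (fun K => F K x) K)
  have hint : ∫⁻ x, g x * g x ∂μ ≤ S * S := by
    rw [lintegral_congr_ae (Eventually.of_forall hsq)]
    rw [lintegral_iSup' (f := fun K x => F K x * F K x) (fun K => (hFmeas K).mul (hFmeas K))
      (Eventually.of_forall fun x K L hKL =>
        mul_le_mul' (hmono x hKL) (hmono x hKL))]
    refine iSup_le fun K => ?_
    have : ∫⁻ x, F K x * F K x ∂μ = ∫⁻ x, (F K x) ^ (2:ℝ) ∂μ :=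
      lintegral_congr_ae (Eventually.of_forall fun x => (rpow_two_enn _).symm)
    rw [this]
    exact enn_le_sq (hQF K)
  have hae : ∀ᵐ x ∂μ, g x * g x < ⊤ := by
    refine ae_lt_top' (hgmeas.mul hgmeas) ?_
    exact ne_top_of_le_ne_top (ENNReal.mul_ne_top hsum hsum) hint
  filter_upwards [hae] with x hx
  by_contra hcon
  rw [not_lt, top_le_iff] at hcon
  have hgx : g x = ⊤ := hcon
  rw [hgx] at hx
  simp at hx

end ae

/-- A.e. summability of the majorants δ_k of the rearranged blocks. -/
theorem rearranged_block_majorants_ae_summable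
    {X : Type*} [MeasurableSpace X] (μ : Measure X)
    {𝕜 : Type*} [RCLike 𝕜]
    {H : Type*} [NormedAddCommGroup H] [InnerProductSpace 𝕜 H] [CompleteSpace H]
    (a : ℕ → 𝕜) (φ : ℕ → X → H)
    (hmem : ∀ n, 1 ≤ n → MemLp (φ n) 2 μ)
    (horth : ∀ n m, 1 ≤ n → 1 ≤ m →
      ∫ x, (inner 𝕜 (φ n x) (φ m x) : 𝕜) ∂μ = if n = m then (1 : 𝕜) else 0)
    (ha1 : a 1 = 0) (ha2 : a 2 = 0)
    (hA : Summable fun k : ℕ =>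
      Real.sqrt (∑ n ∈ Finset.Icc (2 ^ 2 ^ k + 1) (2 ^ 2 ^ (k + 1)),
        ‖a n‖ ^ 2 * (Real.logb 2 (n : ℝ)) ^ 2))
    (σ : Equiv.Perm ℕ) (hσ : σ 0 = 0) :
    ∀ᵐ x ∂μ,
      (∑' k : ℕ, ⨆ p : ℕ, ⨆ q : ℕ,
        (‖∑ n ∈ (Finset.Icc (p + 1) q).filter
            (fun n => σ n ∈ Finset.Icc (2 ^ 2 ^ k + 1) (2 ^ 2 ^ (k + 1))),
          a (σ n) • φ (σ n) x‖₊ : ℝ≥0∞)) < ⊤ := by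
  classical
  have hφnorm : ∀ m, 1 ≤ m → ∫⁻ x, (‖φ m x‖₊ : ℝ≥0∞) ^ (2:ℝ) ∂μ = 1 := by
    intro m hm
    rw [lintegral_nnnorm_sq_eq (hmem m hm)]
    have h1 : ∫ x, ‖φ m x‖ ^ 2 ∂μ
        = RCLike.re (∫ x, (inner 𝕜 (φ m x) (φ m x) : 𝕜) ∂μ) := by
      rw [← integral_re (integrable_inner_of_mem (hmem m hm) (hmem m hm))]
      refine integral_congr_ae (Eventually.of_forall fun x => ?_)
      exact (inner_self_eq_norm_sq _).symm
    rw [h1, horth m m hm hm, if_pos rfl]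
    simp
  -- the quantitative bound for each block
  have key : ∀ k : ℕ,
      (∫⁻ x, (⨆ p : ℕ, ⨆ q : ℕ,
        (‖∑ n ∈ (Finset.Icc (p + 1) q).filter
            (fun n => σ n ∈ Finset.Icc (2 ^ 2 ^ k + 1) (2 ^ 2 ^ (k + 1))),
          a (σ n) • φ (σ n) x‖₊ : ℝ≥0∞)) ^ (2:ℝ) ∂μ) ^ ((1:ℝ)/2)
      ≤ 8 * ENNReal.ofReal (Real.sqrt (∑ n ∈ Finset.Icc (2 ^ 2 ^ k + 1) (2 ^ 2 ^ (k + 1)),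
          ‖a n‖ ^ 2 * (Real.logb 2 (n : ℝ)) ^ 2)) := by
    intro k
    have hone : ∀ {m : ℕ}, m ∈ Finset.Icc (2 ^ 2 ^ k + 1) (2 ^ 2 ^ (k + 1)) → 1 ≤ m := by
      intro m hm
      have h1 := (Finset.mem_Icc.mp hm).1
      have h2 : 1 ≤ 2 ^ 2 ^ k := Nat.one_le_two_pow
      omega
    set t : Finset ℕ :=
      (Finset.Icc (2 ^ 2 ^ k + 1) (2 ^ 2 ^ (k + 1))).image (σ.symm : ℕ → ℕ) with htdef
    have hmemt : ∀ n, n ∈ t ↔ σ n ∈ Finset.Icc (2 ^ 2 ^ k + 1) (2 ^ 2 ^ (k + 1)) := by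
      intro n
      rw [htdef]
      simp only [Finset.mem_image]
      constructor
      · rintro ⟨m, hm, rfl⟩
        simpa using hm
      · intro hn
        exact ⟨σ n, hn, by simp⟩
    have hGmem : ∀ n ∈ t, MemLp (fun x => a (σ n) • φ (σ n) x) 2 μ := by
      intro n hn
      exact (hmem (σ n) (hone ((hmemt n).mp hn))).const_smul (a (σ n))
    have hGorth : ∀ m n, m ∈ t → n ∈ t → m ≠ n →
        ∫ x, (inner 𝕜 (a (σ m) • φ (σ m) x) (a (σ n) • φ (σ n) x) : 𝕜) ∂μ = 0 := by
      intro m n hm hn hmn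
      have h1m := hone ((hmemt m).mp hm)
      have h1n := hone ((hmemt n).mp hn)
      have hne : σ m ≠ σ n := fun hc => hmn (σ.injective hc)
      simp only [inner_smul_left, inner_smul_right]
      rw [integral_const_mul, integral_const_mul, horth _ _ h1m h1n, if_neg hne, mul_zero,
        mul_zero]
    have hblock := block_maximal (μ := μ) 𝕜 (G := fun n x => a (σ n) • φ (σ n) x) t
      hGmem hGorth
    have htsum : ∑ n ∈ t, ∫⁻ x, (‖a (σ n) • φ (σ n) x‖₊ : ℝ≥0∞) ^ (2:ℝ) ∂μ
        = ∑ m ∈ Finset.Icc (2 ^ 2 ^ k + 1) (2 ^ 2 ^ (k + 1)), (‖a m‖₊ : ℝ≥0∞) ^ (2:ℝ) := by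
      rw [htdef, Finset.sum_image (fun m _ m' _ h => σ.symm.injective h)]
      refine Finset.sum_congr rfl fun m hm => ?_
      have h1 : 1 ≤ m := hone hm
      have hsimp : ∀ x : X, (‖a (σ (σ.symm m)) • φ (σ (σ.symm m)) x‖₊ : ℝ≥0∞) ^ (2:ℝ)
          = (‖a m‖₊ : ℝ≥0∞) ^ (2:ℝ) * (‖φ m x‖₊ : ℝ≥0∞) ^ (2:ℝ) := by
        intro x
        rw [Equiv.apply_symm_apply, nnnorm_smul, ENNReal.coe_mul,
          ENNReal.mul_rpow_of_nonneg _ _ (by norm_num : (0:ℝ) ≤ 2)]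
      simp_rw [hsimp]
      rw [lintegral_const_mul' _ _
        (ENNReal.rpow_ne_top_of_nonneg (by norm_num) ENNReal.coe_ne_top)]
      rw [hφnorm m h1, mul_one]
    -- pointwise domination by twice the maximal function
    have hpt : ∀ x : X, (⨆ p : ℕ, ⨆ q : ℕ,
        (‖∑ n ∈ (Finset.Icc (p + 1) q).filter
            (fun n => σ n ∈ Finset.Icc (2 ^ 2 ^ k + 1) (2 ^ 2 ^ (k + 1))),
          a (σ n) • φ (σ n) x‖₊ : ℝ≥0∞))
        ≤ 2 * ⨆ q : ℕ, (‖∑ n ∈ t.filter (fun n => n < q), a (σ n) • φ (σ n) x‖₊ : ℝ≥0∞) := by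
      intro x
      refine iSup_le fun p => iSup_le fun q => ?_
      by_cases hpq : q ≤ p
      · have hempty : Finset.Icc (p + 1) q = ∅ := Finset.Icc_eq_empty (by omega)
        simp [hempty]
      · push_neg at hpq
        have hfe : ∀ r : ℕ, (Finset.range r).filter
              (fun n => σ n ∈ Finset.Icc (2 ^ 2 ^ k + 1) (2 ^ 2 ^ (k + 1)))
            = t.filter (fun n => n < r) := by
          intro r
          ext n
          simp only [Finset.mem_filter, Finset.mem_range, hmemt]
          exact and_comm
        have hsub : (Finset.range (p+1)).filter
              (fun n => σ n ∈ Finset.Icc (2 ^ 2 ^ k + 1) (2 ^ 2 ^ (k + 1)))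
            ⊆ (Finset.range (q+1)).filter
              (fun n => σ n ∈ Finset.Icc (2 ^ 2 ^ k + 1) (2 ^ 2 ^ (k + 1))) :=
          Finset.filter_subset_filter _ (Finset.range_subset_range.mpr (by omega))
        have hsplit : (Finset.Icc (p + 1) q).filter
              (fun n => σ n ∈ Finset.Icc (2 ^ 2 ^ k + 1) (2 ^ 2 ^ (k + 1)))
            = (Finset.range (q+1)).filter
                (fun n => σ n ∈ Finset.Icc (2 ^ 2 ^ k + 1) (2 ^ 2 ^ (k + 1)))
              \ (Finset.range (p+1)).filter
                (fun n => σ n ∈ Finset.Icc (2 ^ 2 ^ k + 1) (2 ^ 2 ^ (k + 1))) := by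
          ext n
          simp only [Finset.mem_filter, Finset.mem_range, Finset.mem_sdiff, Finset.mem_Icc]
          constructor
          · rintro ⟨⟨h1, h2⟩, h3⟩
            exact ⟨⟨by omega, h3⟩, fun hc => by omega⟩
          · rintro ⟨⟨h1, h2⟩, h3⟩
            refine ⟨⟨?_, by omega⟩, h2⟩
            by_contra hcon
            exact h3 ⟨by omega, h2⟩
        rw [hsplit, Finset.sum_sdiff_eq_sub hsub]
        calc (‖_ - _‖₊ : ℝ≥0∞)
            ≤ (‖∑ n ∈ (Finset.range (q+1)).filter
                  (fun n => σ n ∈ Finset.Icc (2 ^ 2 ^ k + 1) (2 ^ 2 ^ (k + 1))),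
                a (σ n) • φ (σ n) x‖₊ : ℝ≥0∞)
              + (‖∑ n ∈ (Finset.range (p+1)).filter
                  (fun n => σ n ∈ Finset.Icc (2 ^ 2 ^ k + 1) (2 ^ 2 ^ (k + 1))),
                a (σ n) • φ (σ n) x‖₊ : ℝ≥0∞) := by
              exact_mod_cast nnnorm_sub_le _ _
          _ ≤ (⨆ r : ℕ, (‖∑ n ∈ t.filter (fun n => n < r), a (σ n) • φ (σ n) x‖₊ : ℝ≥0∞))
              + ⨆ r : ℕ, (‖∑ n ∈ t.filter (fun n => n < r), a (σ n) • φ (σ n) x‖₊ : ℝ≥0∞) := by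
              refine add_le_add ?_ ?_
              · rw [hfe (q+1)]
                exact le_iSup (fun r => (‖∑ n ∈ t.filter (fun n => n < r),
                  a (σ n) • φ (σ n) x‖₊ : ℝ≥0∞)) (q+1)
              · rw [hfe (p+1)]
                exact le_iSup (fun r => (‖∑ n ∈ t.filter (fun n => n < r),
                  a (σ n) • φ (σ n) x‖₊ : ℝ≥0∞)) (p+1)
          _ = 2 * ⨆ r : ℕ, (‖∑ n ∈ t.filter (fun n => n < r),
                a (σ n) • φ (σ n) x‖₊ : ℝ≥0∞) := (two_mul _).symm
    -- cardinality and clog bounds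
    have hcard : t.card ≤ 2 ^ 2 ^ (k + 1) := by
      rw [htdef, Finset.card_image_of_injective _ σ.symm.injective, Nat.card_Icc]
      have he : 2 ^ 2 ^ (k+1) + 1 - (2 ^ 2 ^ k + 1) = 2 ^ 2 ^ (k+1) - 2 ^ 2 ^ k := by omega
      rw [he]
      exact Nat.sub_le _ _
    have hclogN : (Nat.clog 2 t.card : ℝ≥0∞) + 1 ≤ ((2 ^ (k + 2) : ℕ) : ℝ≥0∞) := by
      have h1 : Nat.clog 2 t.card ≤ 2 ^ (k + 1) :=
        le_trans (Nat.clog_mono_right 2 hcard)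
          (le_of_eq (Nat.clog_pow 2 (2 ^ (k + 1)) one_lt_two))
      have h3 : 1 ≤ (2:ℕ) ^ (k + 1) := Nat.one_le_two_pow
      have h4 : (2:ℕ) ^ (k + 2) = 2 * 2 ^ (k + 1) := by ring
      have h2 : Nat.clog 2 t.card + 1 ≤ 2 ^ (k + 2) := by omega
      exact_mod_cast h2
    -- scaling
    have hscale : (∫⁻ x, (2 * ⨆ q : ℕ, (‖∑ n ∈ t.filter (fun n => n < q),
          a (σ n) • φ (σ n) x‖₊ : ℝ≥0∞)) ^ (2:ℝ) ∂μ) ^ ((1:ℝ)/2)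
        = 2 * (∫⁻ x, (⨆ q : ℕ, (‖∑ n ∈ t.filter (fun n => n < q),
          a (σ n) • φ (σ n) x‖₊ : ℝ≥0∞)) ^ (2:ℝ) ∂μ) ^ ((1:ℝ)/2) := by
      have h1 : ∀ u : ℝ≥0∞, (2 * u) ^ (2:ℝ) = (2:ℝ≥0∞) ^ (2:ℝ) * u ^ (2:ℝ) :=
        fun u => ENNReal.mul_rpow_of_nonneg _ _ (by norm_num)
      simp_rw [h1]
      rw [lintegral_const_mul' _ _
        (ENNReal.rpow_ne_top_of_nonneg (by norm_num) ENNReal.ofNat_ne_top),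
        ENNReal.mul_rpow_of_nonneg _ _ (by norm_num : (0:ℝ) ≤ 1/2), ← ENNReal.rpow_mul]
      norm_num
    -- comparison of the ℓ² block mass with the weighted sum
    have hSof : (∑ m ∈ Finset.Icc (2 ^ 2 ^ k + 1) (2 ^ 2 ^ (k + 1)), (‖a m‖₊ : ℝ≥0∞) ^ (2:ℝ))
        = ENNReal.ofReal (∑ m ∈ Finset.Icc (2 ^ 2 ^ k + 1) (2 ^ 2 ^ (k + 1)), ‖a m‖ ^ 2) := by
      rw [ENNReal.ofReal_sum_of_nonneg (fun m _ => sq_nonneg _)]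
      refine Finset.sum_congr rfl fun m _ => ?_
      rw [sq, ENNReal.ofReal_mul (norm_nonneg _), ofReal_norm, enorm_eq_nnnorm, rpow_two_enn]
    have hcompare : ((2:ℝ≥0∞) ^ (k + 2) : ℝ≥0∞)
          * (∑ m ∈ Finset.Icc (2 ^ 2 ^ k + 1) (2 ^ 2 ^ (k + 1)),
              (‖a m‖₊ : ℝ≥0∞) ^ (2:ℝ)) ^ ((1:ℝ)/2)
        ≤ 4 * ENNReal.ofReal (Real.sqrt (∑ n ∈ Finset.Icc (2 ^ 2 ^ k + 1) (2 ^ 2 ^ (k + 1)),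
            ‖a n‖ ^ 2 * (Real.logb 2 (n : ℝ)) ^ 2)) := by
      have hrnn : (0:ℝ) ≤ ∑ m ∈ Finset.Icc (2 ^ 2 ^ k + 1) (2 ^ 2 ^ (k + 1)), ‖a m‖ ^ 2 :=
        Finset.sum_nonneg fun m _ => sq_nonneg _
      have hroot : (∑ m ∈ Finset.Icc (2 ^ 2 ^ k + 1) (2 ^ 2 ^ (k + 1)),
            (‖a m‖₊ : ℝ≥0∞) ^ (2:ℝ)) ^ ((1:ℝ)/2)
          = ENNReal.ofReal (Real.sqrt (∑ m ∈ Finset.Icc (2 ^ 2 ^ k + 1) (2 ^ 2 ^ (k + 1)),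
              ‖a m‖ ^ 2)) := by
        rw [hSof, ENNReal.ofReal_rpow_of_nonneg hrnn (by norm_num), Real.sqrt_eq_rpow]
      have hpow : ((2:ℝ≥0∞) ^ (k + 2) : ℝ≥0∞) = 4 * ENNReal.ofReal ((2:ℝ) ^ k) := by
        rw [show ENNReal.ofReal ((2:ℝ) ^ k) = (2:ℝ≥0∞) ^ k by
          rw [ENNReal.ofReal_pow (by norm_num)]
          norm_num]
        ring
      rw [hroot, hpow, mul_assoc]
      refine mul_le_mul_right ?_ 4
      rw [← ENNReal.ofReal_mul (by positivity)]
      refine ENNReal.ofReal_le_ofReal ?_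
      -- real inequality
      have hsq4 : ((2:ℝ) ^ k) ^ 2 = 4 ^ k := by
        rw [← pow_mul, mul_comm, pow_mul]
        norm_num
      have h4 : (2:ℝ) ^ k * Real.sqrt (∑ m ∈ Finset.Icc (2 ^ 2 ^ k + 1) (2 ^ 2 ^ (k + 1)),
            ‖a m‖ ^ 2)
          = Real.sqrt ((4:ℝ) ^ k * ∑ m ∈ Finset.Icc (2 ^ 2 ^ k + 1) (2 ^ 2 ^ (k + 1)),
              ‖a m‖ ^ 2) := by
        rw [Real.sqrt_mul (by positivity), ← hsq4, Real.sqrt_sq (by positivity)]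
      rw [h4]
      refine Real.sqrt_le_sqrt ?_
      rw [Finset.mul_sum]
      refine Finset.sum_le_sum fun m hm => ?_
      have hm1 : ((2:ℝ) ^ (2 ^ k : ℕ)) ≤ (m : ℝ) := by
        have h5 := (Finset.mem_Icc.mp hm).1
        have h6 : ((2 ^ 2 ^ k : ℕ) : ℝ) ≤ (m : ℝ) := by
          exact_mod_cast Nat.le_of_succ_le h5
        simpa using h6
      have hlog : (2:ℝ) ^ k ≤ Real.logb 2 (m : ℝ) := by
        have h7 : Real.logb 2 ((2:ℝ) ^ (2 ^ k : ℕ)) = (2 ^ k : ℕ) := by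
          rw [Real.logb_pow, Real.logb_self_eq_one (by norm_num)]
          · simp
        calc (2:ℝ) ^ k = ((2 ^ k : ℕ) : ℝ) := by push_cast; ring
          _ = Real.logb 2 ((2:ℝ) ^ (2 ^ k : ℕ)) := h7.symm
          _ ≤ Real.logb 2 (m : ℝ) :=
            Real.logb_le_logb_of_le one_lt_two (by positivity) hm1
      calc (4:ℝ) ^ k * ‖a m‖ ^ 2 = ‖a m‖ ^ 2 * ((2:ℝ) ^ k) ^ 2 := by rw [hsq4]; ring
        _ ≤ ‖a m‖ ^ 2 * (Real.logb 2 (m : ℝ)) ^ 2 := by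
            refine mul_le_mul_of_nonneg_left ?_ (sq_nonneg _)
            exact pow_le_pow_left₀ (by positivity) hlog 2
    -- put everything together
    calc (∫⁻ x, (⨆ p : ℕ, ⨆ q : ℕ,
          (‖∑ n ∈ (Finset.Icc (p + 1) q).filter
              (fun n => σ n ∈ Finset.Icc (2 ^ 2 ^ k + 1) (2 ^ 2 ^ (k + 1))),
            a (σ n) • φ (σ n) x‖₊ : ℝ≥0∞)) ^ (2:ℝ) ∂μ) ^ ((1:ℝ)/2)
        ≤ (∫⁻ x, (2 * ⨆ q : ℕ, (‖∑ n ∈ t.filter (fun n => n < q),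
            a (σ n) • φ (σ n) x‖₊ : ℝ≥0∞)) ^ (2:ℝ) ∂μ) ^ ((1:ℝ)/2) := by
          gcongr with x
          exact hpt x
      _ = 2 * (∫⁻ x, (⨆ q : ℕ, (‖∑ n ∈ t.filter (fun n => n < q),
            a (σ n) • φ (σ n) x‖₊ : ℝ≥0∞)) ^ (2:ℝ) ∂μ) ^ ((1:ℝ)/2) := hscale
      _ ≤ 2 * (((Nat.clog 2 t.card : ℝ≥0∞) + 1)
          * (∑ n ∈ t, ∫⁻ x, (‖a (σ n) • φ (σ n) x‖₊ : ℝ≥0∞) ^ (2:ℝ) ∂μ) ^ ((1:ℝ)/2)) :=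
          mul_le_mul_right hblock 2
      _ ≤ 2 * (((2 ^ (k + 2) : ℕ) : ℝ≥0∞)
          * (∑ m ∈ Finset.Icc (2 ^ 2 ^ k + 1) (2 ^ 2 ^ (k + 1)),
              (‖a m‖₊ : ℝ≥0∞) ^ (2:ℝ)) ^ ((1:ℝ)/2)) := by
          rw [htsum]
          exact mul_le_mul_right (mul_le_mul_left hclogN _) 2
      _ ≤ 2 * (4 * ENNReal.ofReal (Real.sqrt
          (∑ n ∈ Finset.Icc (2 ^ 2 ^ k + 1) (2 ^ 2 ^ (k + 1)),
            ‖a n‖ ^ 2 * (Real.logb 2 (n : ℝ)) ^ 2))) := by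
          refine mul_le_mul_right ?_ 2
          refine le_trans (le_of_eq ?_) hcompare
          congr 1
          push_cast
          ring
      _ = 8 * ENNReal.ofReal (Real.sqrt
          (∑ n ∈ Finset.Icc (2 ^ 2 ^ k + 1) (2 ^ 2 ^ (k + 1)),
            ‖a n‖ ^ 2 * (Real.logb 2 (n : ℝ)) ^ 2)) := by
          rw [← mul_assoc]
          norm_num
  -- measurability of each majorant
  have hmeas : ∀ k : ℕ, AEMeasurable (fun x => ⨆ p : ℕ, ⨆ q : ℕ,
      (‖∑ n ∈ (Finset.Icc (p + 1) q).filter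
          (fun n => σ n ∈ Finset.Icc (2 ^ 2 ^ k + 1) (2 ^ 2 ^ (k + 1))),
        a (σ n) • φ (σ n) x‖₊ : ℝ≥0∞)) μ := by
    intro k
    refine AEMeasurable.iSup fun p => AEMeasurable.iSup fun q => ?_
    refine AEStronglyMeasurable.enorm (β := H) ?_
    refine (memLp_finset_sum (p := 2) _ fun n hn => ?_).aestronglyMeasurable
    have h1 : 1 ≤ σ n := by
      have h2 := (Finset.mem_Icc.mp (Finset.mem_filter.mp hn).2).1
      have h3 : 1 ≤ 2 ^ 2 ^ k := Nat.one_le_two_pow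
      omega
    exact (hmem (σ n) h1).const_smul (a (σ n))
  refine ae_tsum_lt_top _ hmeas ?_
  refine ne_top_of_le_ne_top ?_ (ENNReal.tsum_le_tsum key)
  rw [ENNReal.tsum_mul_left,
    ← ENNReal.ofReal_tsum_of_nonneg (fun k => Real.sqrt_nonneg _) hA]
  exact ENNReal.mul_ne_top (by norm_num) ENNReal.ofReal_ne_top
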